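/- Every point of the closed unit bidisc lies in the disc hull of the two-torus: for each (a,b) with |a| ≤ 1 and |b| ≤ 1, there exists a map φ : closure(D) → ℂ², continuous, holomorphic on D, with φ(∂D) ⊆ {(z₁,z₂) : |z₁| = |z₂| = 1} and φ(0) = (a,b). -/

import Mathlib

open Metric Complex

lemma one_dim_disc (a : ℂ) (ha : ‖a‖ ≤ 1) :
    ∃ f : ℂ → ℂ,
      ContinuousOn f (closedBall 0 1) ∧
      DifferentiableOn ℂ f (ball 0 1) ∧
      (∀ ζ ∈ sphere (0 : ℂ) 1, ‖f ζ‖ = 1) ∧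
      f 0 = a := by
  rcases eq_or_lt_of_le ha with h1 | h1
  · exact ⟨fun _ => a, continuousOn_const, differentiableOn_const a,
      fun ζ _ => h1, rfl⟩
  · have hden : ∀ ζ ∈ closedBall (0:ℂ) 1, 1 + (starRingEnd ℂ a) * ζ ≠ 0 := by
      intro ζ hζ h
      have hζ' : ‖ζ‖ ≤ 1 := by simpa using hζ
      have hlt : ‖(starRingEnd ℂ a) * ζ‖ < 1 := by
        rw [norm_mul, RCLike.norm_conj]
        calc ‖a‖ * ‖ζ‖ ≤ ‖a‖ * 1 := mul_le_mul_of_nonneg_left hζ' (norm_nonneg a)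
          _ < 1 := by simpa using h1
      rw [show (starRingEnd ℂ a) * ζ = -1 by linear_combination h] at hlt
      simp at hlt
    refine ⟨fun ζ => (ζ + a) / (1 + (starRingEnd ℂ a) * ζ), ?_, ?_, ?_, by simp⟩
    · exact ContinuousOn.div (by fun_prop) (by fun_prop) hden
    · exact DifferentiableOn.div (by fun_prop) (by fun_prop)
        (fun ζ hζ => hden ζ (ball_subset_closedBall hζ))
    · intro ζ hζ
      have hζ1 : ‖ζ‖ = 1 := by simpa using hζ
      have hnum : ζ + a ≠ 0 := by
        intro h
        have : ‖a‖ = 1 := by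
          rw [show a = -ζ by linear_combination h, norm_neg, hζ1]
        linarith
      have key : 1 + (starRingEnd ℂ a) * ζ = ζ * (starRingEnd ℂ (ζ + a)) := by
        have h2 : ζ * (starRingEnd ℂ ζ) = 1 := by
          rw [mul_comm, Complex.conj_mul']
          norm_cast
          simp [hζ1]
        rw [map_add, mul_add, h2]
        ring
      rw [norm_div, key, norm_mul, hζ1, one_mul, RCLike.norm_conj,
        div_self (norm_ne_zero_iff.mpr hnum)]

theorem bidisc_in_disc_hull_of_torus
    (a b : ℂ) (ha : ‖a‖ ≤ 1) (hb : ‖b‖ ≤ 1) :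
    ∃ φ : ℂ → ℂ × ℂ,
      ContinuousOn φ (closedBall 0 1) ∧
      DifferentiableOn ℂ φ (ball 0 1) ∧
      (∀ ζ ∈ sphere (0 : ℂ) 1, ‖(φ ζ).1‖ = 1 ∧ ‖(φ ζ).2‖ = 1) ∧
      φ 0 = (a, b) := by
  obtain ⟨f, fc, fd, fs, f0⟩ := one_dim_disc a ha
  obtain ⟨g, gc, gd, gs, g0⟩ := one_dim_disc b hb
  exact ⟨fun ζ => (f ζ, g ζ), fc.prodMk gc, fd.prodMk gd,
    fun ζ hζ => ⟨fs ζ hζ, gs ζ hζ⟩, by simp [f0, g0]⟩
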